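/- UCB1 regret bound (Theorem 2.1, Auer et al. 2002): consider K > 1 arms where for each arm i the rewards R_{i,1}, R_{i,2}, … are i.i.d. random variables with values in [0,1] and mean μ_i, independent across arms; let μ* := max_i μ_i. The UCB1 policy selects I_t := t for t ≤ K, and for t > K selects I_t := argmax_{i} ( x̄_i(t−1) + √(2·ln t / T_i(t−1)) ), where T_i(t−1) is the number of times arm i was played in the first t−1 trials and x̄_i(t−1) is the empirical mean reward of arm i over those plays. Then for every number of trials n, the pseudo-regret ξ̂(n) := Σ_{i : μ_i < μ*} (μ* − μ_i)·E[T_i(n)] satisfies ξ̂(n) ≤ 8·Σ_{i : μ_i < μ*} ( ln n / (μ* − μ_i) ) + (1 + π²/3)·Σ_{i=1}^{K} (μ* − μ_i). -/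

import Mathlib

open MeasureTheory ProbabilityTheory

/-- `playCount I i n ω`: the number of times arm `i` is played by the policy `I` during the
first `n` trials (trials are indexed `0, 1, …, n-1`). -/
def playCount {Ω : Type*} {K : ℕ} (I : ℕ → Ω → Fin K) (i : Fin K) (n : ℕ) (ω : Ω) : ℕ :=
  ((Finset.range n).filter fun t => I t ω = i).card

/-- `empMean R I i n ω`: the empirical mean reward of arm `i` over its plays during the first
`n` trials, where `R i s` is the reward received from the `(s+1)`-th play of arm `i`. -/
noncomputable def empMean {Ω : Type*} {K : ℕ} (R : Fin K → ℕ → Ω → ℝ) (I : ℕ → Ω → Fin K)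
    (i : Fin K) (n : ℕ) (ω : Ω) : ℝ :=
  (∑ s ∈ Finset.range (playCount I i n ω), R i s ω) / (playCount I i n ω)

/-- The UCB1 index of arm `i` before (0-indexed) trial `t`, i.e. after `t` completed trials:
empirical mean plus the exploration bonus `√(2 ln t' / T_i(t-1))` where `t' = t + 1` is the
1-indexed trial number. -/
noncomputable def ucbIndex {Ω : Type*} {K : ℕ} (R : Fin K → ℕ → Ω → ℝ) (I : ℕ → Ω → Fin K)
    (i : Fin K) (t : ℕ) (ω : Ω) : ℝ :=
  empMean R I i t ω + Real.sqrt (2 * Real.log (t + 1) / (playCount I i t ω))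

/-- `I` is a UCB1 policy: during the first `K` trials each arm is played once, and afterwards
the policy plays an arm maximizing the UCB1 index. -/
def IsUCB1Policy {Ω : Type*} {K : ℕ} (R : Fin K → ℕ → Ω → ℝ) (I : ℕ → Ω → Fin K) : Prop :=
  (∀ (t : ℕ) (ht : t < K), ∀ ω, I t ω = ⟨t, ht⟩) ∧
  (∀ t : ℕ, K ≤ t → ∀ ω, ∀ j : Fin K, ucbIndex R I j t ω ≤ ucbIndex R I (I t ω) t ω)

section UCB1Aux
open Real

lemma exp_convex_bound {x t : ℝ} (h0 : 0 ≤ x) (h1 : x ≤ 1) :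
    Real.exp (t * x) ≤ 1 - x + x * Real.exp t := by
  have := (convexOn_exp.2 (Set.mem_univ (0:ℝ)) (Set.mem_univ t)
    (by linarith : (0:ℝ) ≤ 1 - x) h0 (by ring)) 
  simp only [smul_eq_mul, mul_zero, zero_add, Real.exp_zero, mul_one] at this
  rw [mul_comm]
  linarith [this]

lemma hfun_pos {p : ℝ} (hp0 : 0 ≤ p) (hp1 : p ≤ 1) (x : ℝ) :
    0 < 1 - p + p * Real.exp x := by
  nlinarith [Real.exp_pos x, mul_nonneg hp0 (Real.exp_pos x).le,
    mul_nonneg (sub_nonneg.2 hp1) (Real.exp_pos x).le]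

lemma key_ineq {p : ℝ} (hp0 : 0 ≤ p) (hp1 : p ≤ 1) {t : ℝ} (ht : 0 ≤ t) :
    Real.log (1 - p + p * Real.exp t) ≤ t * p + t ^ 2 / 8 := by
  set h : ℝ → ℝ := fun x => 1 - p + p * Real.exp x with hh
  have hpos : ∀ x, 0 < h x := hfun_pos hp0 hp1
  set g : ℝ → ℝ := fun x => p * Real.exp x / h x with hg
  -- derivative facts
  have hd : ∀ x, HasDerivAt h (p * Real.exp x) x := by
    intro x
    exact ((Real.hasDerivAt_exp x).const_mul p).const_add (1 - p)
  have hgd : ∀ x, HasDerivAt g ((1 - p) * (p * Real.exp x) / (h x) ^ 2) x := by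
    intro x
    have hdq := ((Real.hasDerivAt_exp x).const_mul p).div (hd x) (hpos x).ne'
    refine hdq.congr_deriv ?_
    have h0 := (hpos x).ne'
    simp only [hh]
    ring
  have hgd_le : ∀ x, (1 - p) * (p * Real.exp x) / (h x) ^ 2 ≤ 1 / 4 := by
    intro x
    rw [div_le_div_iff₀ (pow_pos (hpos x) 2) (by norm_num : (0:ℝ) < 4)]
    have : (h x) ^ 2 = ((1 - p) + p * Real.exp x) ^ 2 := rfl
    nlinarith [sq_nonneg ((1 - p) - p * Real.exp x)]
  -- G x := g x - p - x / 4 is antitone on [0, ∞), G 0 = 0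
  set G : ℝ → ℝ := fun x => g x - p - x / 4 with hG
  have hGd : ∀ x, HasDerivAt G ((1 - p) * (p * Real.exp x) / (h x) ^ 2 - 1 / 4) x := by
    intro x
    exact ((hgd x).sub_const p).sub ((hasDerivAt_id x).div_const 4)
  have hGanti : AntitoneOn G (Set.Ici 0) := by
    refine antitoneOn_of_deriv_nonpos (convex_Ici 0) ?_ ?_ ?_
    · exact fun x _ => ((hGd x).continuousAt).continuousWithinAt
    · exact fun x _ => (hGd x).differentiableAt.differentiableWithinAt
    · intro x _
      rw [(hGd x).deriv]
      linarith [hgd_le x]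
  have hG0 : G 0 = 0 := by
    simp only [hG, hg, hh]
    simp [Real.exp_zero]
  have hGle : ∀ x, 0 ≤ x → G x ≤ 0 := fun x hx =>
    hG0 ▸ hGanti Set.self_mem_Ici hx hx
  -- F x := log (h x) - x * p - x^2/8 is antitone on [0, ∞), F 0 = 0
  set F : ℝ → ℝ := fun x => Real.log (h x) - x * p - x ^ 2 / 8 with hF
  have hFd : ∀ x, HasDerivAt F (G x) x := by
    intro x
    have h1 : HasDerivAt (fun x => Real.log (h x)) (p * Real.exp x / h x) x :=
      (hd x).log (hpos x).ne'
    have h2 : HasDerivAt (fun x : ℝ => x * p) p x := by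
      simpa using (hasDerivAt_id x).mul_const p
    have h3 : HasDerivAt (fun x : ℝ => x ^ 2 / 8) (x / 4) x := by
      have := ((hasDerivAt_pow 2 x)).div_const 8
      refine this.congr_deriv ?_
      push_cast
      norm_num
      ring
    have := (h1.sub h2).sub h3
    exact this
  have hFanti : AntitoneOn F (Set.Ici 0) := by
    refine antitoneOn_of_deriv_nonpos (convex_Ici 0) ?_ ?_ ?_
    · exact fun x _ => ((hFd x).continuousAt).continuousWithinAt
    · exact fun x _ => (hFd x).differentiableAt.differentiableWithinAt
    · intro x hx
      rw [(hFd x).deriv]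
      exact hGle x (le_of_lt (by simpa using hx))
  have hF0 : F 0 = 0 := by
    simp only [hF, hh]
    simp
  have := hFanti Set.self_mem_Ici (Set.mem_Ici.2 ht) ht
  rw [hF0] at this
  have : F t ≤ 0 := this
  simp only [hF] at this
  linarith
open MeasureTheory ProbabilityTheory Real

variable {Ω : Type*} [MeasurableSpace Ω] {P : Measure Ω} [IsProbabilityMeasure P]

lemma bdd_integrable {X : Ω → ℝ} (hX : Measurable X) {C : ℝ} (hC : ∀ ω, |X ω| ≤ C) :
    Integrable X P :=
  (integrable_const C).mono' hX.aestronglyMeasurable (Filter.Eventually.of_forall hC)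

lemma hoeffding_mgf {X : Ω → ℝ} (hX : Measurable X) (h01 : ∀ ω, X ω ∈ Set.Icc (0:ℝ) 1)
    {t : ℝ} (ht : 0 ≤ t) :
    ∫ ω, Real.exp (t * (X ω - ∫ ω', X ω' ∂P)) ∂P ≤ Real.exp (t ^ 2 / 8) := by
  set p : ℝ := ∫ ω', X ω' ∂P with hp
  have hXint : Integrable X P := bdd_integrable hX (C := 1) (fun ω => by
    rw [abs_le]; constructor <;> [linarith [(h01 ω).1]; linarith [(h01 ω).2]])
  have hp0 : 0 ≤ p := integral_nonneg fun ω => (h01 ω).1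
  have hp1 : p ≤ 1 := by
    calc p ≤ ∫ _ω, (1:ℝ) ∂P := integral_mono hXint (integrable_const 1) fun ω => (h01 ω).2
    _ = 1 := by simp
  have hstep : ∫ ω, Real.exp (t * X ω) ∂P ≤ 1 - p + p * Real.exp t := by
    have hle : ∀ ω, Real.exp (t * X ω) ≤ 1 - X ω + X ω * Real.exp t := fun ω =>
      exp_convex_bound (h01 ω).1 (h01 ω).2
    have hint1 : Integrable (fun ω => Real.exp (t * X ω)) P := by
      refine bdd_integrable ((hX.const_mul t).exp) (C := Real.exp |t|) fun ω => ?_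
      rw [abs_of_pos (Real.exp_pos _), Real.exp_le_exp]
      calc t * X ω ≤ |t * X ω| := le_abs_self _
      _ = |t| * |X ω| := abs_mul _ _
      _ ≤ |t| * 1 := by
            have := abs_le.2 ⟨by linarith [(h01 ω).1], (h01 ω).2⟩
            exact mul_le_mul_of_nonneg_left this (abs_nonneg t)
      _ = |t| := mul_one _
    have hint2 : Integrable (fun ω => 1 - X ω + X ω * Real.exp t) P := by
      exact ((integrable_const 1).sub hXint).add (hXint.mul_const _)
    calc ∫ ω, Real.exp (t * X ω) ∂P ≤ ∫ ω, (1 - X ω + X ω * Real.exp t) ∂P :=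
          integral_mono hint1 hint2 hle
    _ = 1 - p + p * Real.exp t := by
          have ha : Integrable (fun ω => 1 - X ω) P := (integrable_const 1).sub hXint
          have hb : Integrable (fun ω => X ω * Real.exp t) P := hXint.mul_const _
          rw [integral_add ha hb, integral_sub (integrable_const 1) hXint,
            integral_mul_const]
          simp [hp]
  have key := key_ineq hp0 hp1 ht
  calc ∫ ω, Real.exp (t * (X ω - p)) ∂P
      = Real.exp (-(t * p)) * ∫ ω, Real.exp (t * X ω) ∂P := by
        rw [← integral_const_mul]
        congr 1 with ω
        rw [← Real.exp_add]
        ring_nf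
  _ ≤ Real.exp (-(t * p)) * (1 - p + p * Real.exp t) := by
        exact mul_le_mul_of_nonneg_left hstep (Real.exp_pos _).le
  _ ≤ Real.exp (-(t * p)) * Real.exp (t * p + t ^ 2 / 8) := by
        refine mul_le_mul_of_nonneg_left ?_ (Real.exp_pos _).le
        rw [← Real.exp_log (hfun_pos hp0 hp1 t)]
        exact Real.exp_le_exp.2 key
  _ = Real.exp (t ^ 2 / 8) := by rw [← Real.exp_add]; ring_nf

lemma chernoff {X : ℕ → Ω → ℝ} (hX : ∀ u, Measurable (X u))
    (h01 : ∀ u ω, X u ω ∈ Set.Icc (0:ℝ) 1)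
    (hind : iIndepFun X P)
    {p : ℝ} (hp : ∀ u, ∫ ω, X u ω ∂P = p) (s : ℕ) {ε : ℝ} (hε : 0 ≤ ε) :
    (P {ω | s * p + s * ε ≤ ∑ u ∈ Finset.range s, X u ω}).toReal
      ≤ Real.exp (-2 * s * ε ^ 2) := by
  set Y : ℕ → Ω → ℝ := fun u ω => X u ω - p with hY
  have hYmeas : ∀ u, Measurable (Y u) := fun u => (hX u).sub_const p
  have hYind : iIndepFun Y P := by
    have := hind.comp (fun _ x => x - p) (fun _ => measurable_id.sub_const p)
    exact this
  have hYbd : ∀ u ω, |Y u ω| ≤ 1 + |p| := by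
    intro u ω
    have h1 := (h01 u ω).1; have h2 := (h01 u ω).2
    have ha := neg_abs_le p; have hb := le_abs_self p
    rw [abs_le]
    constructor <;> simp only [hY] <;> [linarith; linarith]
  have hYint : ∀ u, Integrable (fun ω => Real.exp (4 * ε * Y u ω)) P := by
    intro u
    refine bdd_integrable ((hYmeas u).const_mul _).exp
      (C := Real.exp (4 * ε * (1 + |p|))) fun ω => ?_
    rw [abs_of_pos (Real.exp_pos _), Real.exp_le_exp]
    calc 4 * ε * Y u ω ≤ 4 * ε * |Y u ω| :=
          mul_le_mul_of_nonneg_left (le_abs_self _) (by linarith)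
    _ ≤ 4 * ε * (1 + |p|) := mul_le_mul_of_nonneg_left (hYbd u ω) (by linarith)
  have hmgf : mgf (∑ u ∈ Finset.range s, Y u) P (4 * ε) ≤ Real.exp (2 * s * ε ^ 2) := by
    rw [hYind.mgf_sum hYmeas]
    calc ∏ u ∈ Finset.range s, mgf (Y u) P (4 * ε)
        ≤ ∏ _u ∈ Finset.range s, Real.exp (2 * ε ^ 2) := by
          refine Finset.prod_le_prod (fun u _ => mgf_nonneg) fun u _ => ?_
          have hh := hoeffding_mgf (P := P) (hX u) (h01 u) (t := 4 * ε) (by linarith)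
          rw [hp u] at hh
          have heq : mgf (Y u) P (4 * ε)
              = ∫ ω, Real.exp (4 * ε * (X u ω - p)) ∂P := rfl
          rw [heq]
          refine hh.trans (le_of_eq ?_)
          norm_num
          ring_nf
    _ = Real.exp (2 * s * ε ^ 2) := by
          rw [Finset.prod_const, Finset.card_range, ← Real.exp_nat_mul]
          ring_nf
  have hev : {ω | (s:ℝ) * p + s * ε ≤ ∑ u ∈ Finset.range s, X u ω}
      = {ω | (s:ℝ) * ε ≤ (∑ u ∈ Finset.range s, Y u) ω} := by
    ext ω
    simp only [Set.mem_setOf_eq, Finset.sum_apply, hY, Finset.sum_sub_distrib,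
      Finset.sum_const, Finset.card_range, nsmul_eq_mul]
    constructor <;> intro h <;> linarith
  rw [hev]
  calc (P {ω | (s:ℝ) * ε ≤ (∑ u ∈ Finset.range s, Y u) ω}).toReal
      ≤ Real.exp (-(4 * ε) * ((s:ℝ) * ε)) * mgf (∑ u ∈ Finset.range s, Y u) P (4 * ε) :=
        measure_ge_le_exp_mul_mgf ((s:ℝ) * ε) (by linarith)
          (hYind.integrable_exp_mul_sum hYmeas fun u _ => hYint u)
  _ ≤ Real.exp (-(4 * ε) * ((s:ℝ) * ε)) * Real.exp (2 * s * ε ^ 2) :=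
        mul_le_mul_of_nonneg_left hmgf (Real.exp_pos _).le
  _ = Real.exp (-2 * s * ε ^ 2) := by rw [← Real.exp_add]; ring_nf

lemma iIndepFun_comp_inj {ι κ Ω β : Type*} [MeasurableSpace Ω] [MeasurableSpace β]
    {P : Measure Ω} {X : κ → Ω → β}
    (h : iIndepFun X P) {g : ι → κ} (hg : Function.Injective g) :
    iIndepFun (fun i => X (g i)) P := by
  classical
  rw [iIndepFun_iff_measure_inter_preimage_eq_mul] at h ⊢
  intro S sets hsets
  set sets' : κ → Set β := fun k => ⋂ i ∈ S.filter (fun i => g i = k), sets i with hsets'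
  have key : ∀ i ∈ S, sets' (g i) = sets i := by
    intro i hi
    have : S.filter (fun j => g j = g i) = {i} := by
      ext j
      simp only [Finset.mem_filter, Finset.mem_singleton]
      constructor
      · rintro ⟨-, hj⟩; exact hg hj
      · rintro rfl; exact ⟨hi, rfl⟩
    show (⋂ j ∈ S.filter (fun j => g j = g i), sets j) = sets i
    rw [this]
    simp
  have hmeas' : ∀ k ∈ S.map ⟨g, hg⟩, MeasurableSet (sets' k) := by
    intro k hk
    rw [Finset.mem_map] at hk
    obtain ⟨i, hi, rfl⟩ := hk
    simp only [Function.Embedding.coeFn_mk]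
    rw [key i hi]
    exact hsets i hi
  have := h (S.map ⟨g, hg⟩) hmeas'
  rw [Finset.prod_map] at this
  have hseteq : (⋂ k ∈ S.map ⟨g, hg⟩, X k ⁻¹' sets' k)
      = ⋂ i ∈ S, X (g i) ⁻¹' sets i := by
    apply Set.ext; intro ω
    simp only [Set.mem_iInter, Finset.mem_map, Function.Embedding.coeFn_mk]
    constructor
    · intro hω i hi
      have := hω (g i) ⟨i, hi, rfl⟩
      rwa [key i hi] at this
    · rintro hω k ⟨i, hi, rfl⟩
      rw [key i hi]
      exact hω i hi
  rw [hseteq] at this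
  rw [this]
  apply Finset.prod_congr rfl
  intro i hi
  simp [Function.Embedding.coeFn_mk, key i hi]

section PlayCount

variable {Ω : Type*} {K : ℕ} {I : ℕ → Ω → Fin K} {i : Fin K}

lemma playCount_card_eq (I : ℕ → Ω → Fin K) (i : Fin K) (n : ℕ) (ω : Ω) :
    playCount I i n ω = ∑ t ∈ Finset.range n, if I t ω = i then 1 else 0 :=
  Finset.card_filter _ _

lemma playCount_le (I : ℕ → Ω → Fin K) (i : Fin K) (n : ℕ) (ω : Ω) :
    playCount I i n ω ≤ n := by
  simpa [playCount] using Finset.card_filter_le (Finset.range n) _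

lemma playCount_mono (I : ℕ → Ω → Fin K) (i : Fin K) {m n : ℕ} (h : m ≤ n) (ω : Ω) :
    playCount I i m ω ≤ playCount I i n ω :=
  Finset.card_le_card (Finset.filter_subset_filter _ (Finset.range_subset_range.2 h))

lemma playCount_succ (I : ℕ → Ω → Fin K) (i : Fin K) (t : ℕ) (ω : Ω) :
    playCount I i (t + 1) ω
      = playCount I i t ω + if I t ω = i then 1 else 0 := by
  simp only [playCount_card_eq, Finset.sum_range_succ]

lemma playCount_strict {ω : Ω} {t t' : ℕ} (h : t < t') (hit : I t ω = i) :
    playCount I i t ω < playCount I i t' ω := by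
  have h1 : playCount I i t ω + 1 = playCount I i (t + 1) ω := by
    rw [playCount_succ, if_pos hit]
  have h2 : playCount I i (t + 1) ω ≤ playCount I i t' ω :=
    playCount_mono I i h ω
  omega

lemma measurable_playCount [MeasurableSpace Ω] (hImeas : ∀ t, Measurable (I t))
    (i : Fin K) (n : ℕ) : Measurable fun ω => playCount I i n ω := by
  simp only [playCount_card_eq]
  refine Finset.measurable_sum _ fun t _ => Measurable.ite ?_ measurable_const
    measurable_const
  exact hImeas t (measurableSet_singleton i)

/-- Pointwise decomposition: plays of arm `i` in the first `n` rounds, except at most `ℓ`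
of them, happen at rounds `t ∈ [K, n)` where the play count is already at least `ℓ`. -/
lemma playCount_pointwise {R : Fin K → ℕ → Ω → ℝ} (hI : IsUCB1Policy R I)
    (i : Fin K) (n : ℕ) {ℓ : ℕ} (hℓ : 1 ≤ ℓ) (ω : Ω) :
    playCount I i n ω ≤ ℓ + ((Finset.Ico K n).filter fun t =>
      I t ω = i ∧ ℓ ≤ playCount I i t ω).card := by
  classical
  set S : Finset ℕ := (Finset.range n).filter (fun t => I t ω = i) with hS
  have hsplit : playCount I i n ω
      = (S.filter fun t => ℓ ≤ playCount I i t ω).card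
        + (S.filter fun t => ¬ ℓ ≤ playCount I i t ω).card := by
    rw [playCount, hS, Finset.card_filter_add_card_filter_not]
  rw [hsplit, add_comm]
  gcongr
  · -- few plays with small count : map to playCount value
    have : (S.filter fun t => ¬ ℓ ≤ playCount I i t ω).card
        ≤ (Finset.range ℓ).card := by
      apply Finset.card_le_card_of_injOn (fun t => playCount I i t ω)
      · intro t ht
        simp only [Finset.mem_coe, Finset.mem_filter, not_le] at ht
        simpa using ht.2
      · intro t ht t' ht' hval
        simp only [Finset.mem_coe, Finset.mem_filter, hS] at ht ht'
        by_contra hne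
        rcases lt_or_gt_of_ne hne with h | h
        · exact absurd hval (Nat.ne_of_lt (playCount_strict h ht.1.2))
        · exact absurd hval.symm (Nat.ne_of_lt (playCount_strict h ht'.1.2))
    simpa using this
  · -- plays with count ≥ ℓ occur at rounds in [K, n)
    intro t ht
    simp only [Finset.mem_filter, hS, Finset.mem_range] at ht
    obtain ⟨⟨htn, hti⟩, hcnt⟩ := ht
    simp only [Finset.mem_filter, Finset.mem_Ico]
    refine ⟨⟨?_, htn⟩, hti, hcnt⟩
    by_contra hKt
    push_neg at hKt
    -- t < K : initial round, so I t ω = ⟨t⟩, hence i = ⟨t⟩ and playCount = 0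
    have h1 := hI.1 t hKt ω
    rw [h1] at hti
    have hival : (i : ℕ) = t := by rw [← hti]
    have hzero : playCount I i t ω = 0 := by
      rw [playCount, Finset.card_eq_zero, Finset.filter_eq_empty_iff]
      intro u hu
      rw [Finset.mem_range] at hu
      have := hI.1 u (lt_trans hu hKt) ω
      rw [this]
      intro heq
      have : u = (i : ℕ) := by rw [← heq]
      omega
    omega

end PlayCount

lemma sum_inv_sq_bound (n : ℕ) :
    ∑ t ∈ Finset.Ico 2 n, (2:ℝ)/((t:ℝ)+1)^2 ≤ 1 := by
  rcases le_or_gt n 2 with h | h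
  · rw [Finset.Ico_eq_empty (by omega)]; simp
  · have key : ∀ m : ℕ, 2 ≤ m → ∑ t ∈ Finset.Ico 2 m, (2:ℝ)/((t:ℝ)+1)^2 ≤ 1 - 2/(m:ℝ) := by
      intro m hm
      induction m, hm using Nat.le_induction with
      | base => simp
      | succ m hm ih =>
        rw [Finset.sum_Ico_succ_top hm]
        have hm0 : (0:ℝ) < (m:ℝ) := by exact_mod_cast Nat.lt_of_lt_of_le Nat.zero_lt_two hm
        have hstep : (2:ℝ)/((m:ℝ)+1)^2 ≤ 2/(m:ℝ) - 2/((m:ℝ)+1) := by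
          rw [div_sub_div _ _ (ne_of_gt hm0) (by positivity)]
          rw [div_le_div_iff₀ (by positivity) (by positivity)]
          nlinarith
        push_cast
        calc (∑ t ∈ Finset.Ico 2 m, (2:ℝ)/((t:ℝ)+1)^2) + 2/((m:ℝ)+1)^2
            ≤ (1 - 2/(m:ℝ)) + (2/(m:ℝ) - 2/((m:ℝ)+1)) := add_le_add ih hstep
        _ = 1 - 2/((m:ℝ)+1) := by ring
    have := key n h.le
    have h2n : 0 ≤ 2/(n:ℝ) := by positivity
    linarith

lemma exp_neg_four_log {m : ℝ} (hm : 1 ≤ m) :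
    Real.exp (-(4 * Real.log m)) = (m^4)⁻¹ := by
  rw [show (4:ℝ) * Real.log m = Real.log (m^4) by
      rw [Real.log_pow]; push_cast; ring,
    Real.exp_neg, Real.exp_log (by positivity)]

lemma playCount_pos {Ω : Type*} {K : ℕ} {R : Fin K → ℕ → Ω → ℝ} {I : ℕ → Ω → Fin K}
    (hI : IsUCB1Policy R I) (j : Fin K) {t : ℕ} (ht : K ≤ t) (ω : Ω) :
    1 ≤ playCount I j t ω := by
  rw [playCount]
  refine Finset.card_pos.2 ⟨(j : ℕ), Finset.mem_filter.2 ⟨?_, ?_⟩⟩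
  · exact Finset.mem_range.2 (lt_of_lt_of_le j.isLt ht)
  · rw [hI.1 (j : ℕ) j.isLt ω]

set_option maxHeartbeats 2000000 in
lemma arm_bound {Ω : Type*} [MeasurableSpace Ω]
    (P : Measure Ω) [IsProbabilityMeasure P] {K : ℕ} (hK : 1 < K)
    (R : Fin K → ℕ → Ω → ℝ) (hRmeas : ∀ i s, Measurable (R i s))
    (hRrange : ∀ i s ω, R i s ω ∈ Set.Icc (0 : ℝ) 1)
    (hindep : iIndepFun (fun p : Fin K × ℕ => R p.1 p.2) P)
    (μ : Fin K → ℝ) (hmean : ∀ i s, ∫ ω, R i s ω ∂P = μ i)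
    (μstar : ℝ)
    (I : ℕ → Ω → Fin K) (hImeas : ∀ t, Measurable (I t)) (hI : IsUCB1Policy R I)
    (n : ℕ) (i istar : Fin K) (histar : μ istar = μstar) (hi : μ i < μstar) :
    ∫ ω, (playCount I i n ω : ℝ) ∂P
      ≤ 8 * Real.log n / (μstar - μ i) ^ 2 + 2 := by
  classical
  set Δ : ℝ := μstar - μ i with hΔdef
  have hΔ : 0 < Δ := by simp only [hΔdef]; linarith
  set ℓ : ℕ := max 1 ⌈8 * Real.log n / Δ^2⌉₊ with hℓdef
  have hℓ1 : 1 ≤ ℓ := le_max_left _ _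
  have hlogn : 0 ≤ Real.log n := by
    rcases Nat.eq_zero_or_pos n with h | h
    · simp [h]
    · exact Real.log_nonneg (by exact_mod_cast h)
  have hx0 : 0 ≤ 8 * Real.log n / Δ^2 := by positivity
  have hℓle : (ℓ:ℝ) ≤ 8 * Real.log n / Δ^2 + 1 := by
    rw [hℓdef]
    push_cast [Nat.cast_max]
    exact max_le (by linarith) (Nat.ceil_lt_add_one hx0).le
  have hℓge : 8 * Real.log n / Δ^2 ≤ (ℓ:ℝ) := by
    refine le_trans (Nat.le_ceil _) ?_
    exact_mod_cast le_max_right 1 _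
  set c : ℕ → ℕ → ℝ := fun t s => Real.sqrt (2 * Real.log ((t:ℝ)+1) / (s:ℝ)) with hcdef
  set A : ℕ → Set Ω := fun t => {ω | I t ω = i ∧ ℓ ≤ playCount I i t ω} with hAdef
  have hAmeas : ∀ t, MeasurableSet (A t) := by
    intro t
    have h1 : MeasurableSet {ω | I t ω = i} := hImeas t (measurableSet_singleton i)
    have h2 : MeasurableSet {ω | ℓ ≤ playCount I i t ω} :=
      measurable_playCount hImeas i t measurableSet_Ici
    exact h1.inter h2
  have hindic : ∀ t, Integrable ((A t).indicator (fun _ => (1:ℝ))) P :=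
    fun t => (integrable_const 1).indicator (hAmeas t)
  -- Step 1 : expectation bound through indicators
  have step1 : ∫ ω, (playCount I i n ω : ℝ) ∂P
      ≤ (ℓ:ℝ) + ∑ t ∈ Finset.Ico K n, (P (A t)).toReal := by
    have hptw : ∀ ω, (playCount I i n ω : ℝ)
        ≤ (ℓ:ℝ) + ∑ t ∈ Finset.Ico K n, (A t).indicator (fun _ => (1:ℝ)) ω := by
      intro ω
      have h := playCount_pointwise hI i n hℓ1 ω
      have hcard : (((Finset.Ico K n).filter fun t =>
            I t ω = i ∧ ℓ ≤ playCount I i t ω).card : ℝ)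
          = ∑ t ∈ Finset.Ico K n, (A t).indicator (fun _ => (1:ℝ)) ω := by
        rw [Finset.card_filter]
        push_cast
        refine Finset.sum_congr rfl fun t _ => ?_
        simp [Set.indicator_apply, hAdef, Set.mem_setOf_eq]
      have h' : (playCount I i n ω : ℝ) ≤ (ℓ:ℝ) + (((Finset.Ico K n).filter fun t =>
            I t ω = i ∧ ℓ ≤ playCount I i t ω).card : ℝ) := by exact_mod_cast h
      rwa [hcard] at h'
    have hintL : Integrable (fun ω => (playCount I i n ω : ℝ)) P := by
      refine bdd_integrable ?_ (C := (n:ℝ)) fun ω => ?_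
      · exact measurable_from_top.comp (measurable_playCount hImeas i n)
      · rw [abs_of_nonneg (Nat.cast_nonneg _)]
        exact_mod_cast playCount_le I i n ω
    have hintR : Integrable (fun ω => (ℓ:ℝ)
        + ∑ t ∈ Finset.Ico K n, (A t).indicator (fun _ => (1:ℝ)) ω) P :=
      (integrable_const _).add (integrable_finset_sum _ fun t _ => hindic t)
    calc ∫ ω, (playCount I i n ω : ℝ) ∂P
        ≤ ∫ ω, ((ℓ:ℝ) + ∑ t ∈ Finset.Ico K n, (A t).indicator (fun _ => (1:ℝ)) ω) ∂P :=
          integral_mono hintL hintR hptw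
    _ = (ℓ:ℝ) + ∑ t ∈ Finset.Ico K n, (P (A t)).toReal := by
        rw [integral_add (integrable_const _)
            (integrable_finset_sum _ fun t _ => hindic t), integral_const,
          integral_finset_sum _ fun t _ => hindic t]
        simp only [smul_eq_mul, probReal_univ, one_mul]
        congr 1
        refine Finset.sum_congr rfl fun t _ => ?_
        rw [integral_indicator_const (1:ℝ) (hAmeas t), smul_eq_mul, mul_one, Measure.real]
  -- Step 2 : per-round probability bound
  have step2 : ∀ t, K ≤ t → t < n → (P (A t)).toReal ≤ 2/((t:ℝ)+1)^2 := by
    intro t hKt htn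
    have ht0 : (0:ℝ) ≤ (t:ℝ) := Nat.cast_nonneg t
    have ht1 : (1:ℝ) ≤ (t:ℝ) + 1 := by linarith
    have hL0 : 0 ≤ Real.log ((t:ℝ)+1) := Real.log_nonneg ht1
    set Bad1 : ℕ → Set Ω := fun s =>
      {ω | (s:ℝ) * μ i + (s:ℝ) * c t s ≤ ∑ u ∈ Finset.range s, R i u ω} with hB1def
    set Bad2 : ℕ → Set Ω := fun s =>
      {ω | (s:ℝ) * (1 - μstar) + (s:ℝ) * c t s
        ≤ ∑ u ∈ Finset.range s, (1 - R istar u ω)} with hB2def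
    -- inclusion
    have hsub : A t ⊆ (⋃ s ∈ Finset.Icc ℓ t, Bad1 s) ∪ ⋃ s ∈ Finset.Icc 1 t, Bad2 s := by
      intro ω hω
      simp only [hAdef, Set.mem_setOf_eq] at hω
      obtain ⟨hti, hcnt⟩ := hω
      by_contra hnot
      simp only [Set.mem_union, Set.mem_iUnion, not_or, not_exists] at hnot
      obtain ⟨hn1, hn2⟩ := hnot
      set s : ℕ := playCount I i t ω with hs
      set s' : ℕ := playCount I istar t ω with hs'
      have hst : s ≤ t := playCount_le I i t ω
      have hs'1 : 1 ≤ s' := playCount_pos hI istar hKt ω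
      have hs't : s' ≤ t := playCount_le I istar t ω
      have hb1 := hn1 s (Finset.mem_Icc.2 ⟨hcnt, hst⟩)
      have hb2 := hn2 s' (Finset.mem_Icc.2 ⟨hs'1, hs't⟩)
      simp only [hB1def, Set.mem_setOf_eq, not_le] at hb1
      simp only [hB2def, Set.mem_setOf_eq, not_le] at hb2
      have hspos : (0:ℝ) < (s:ℝ) := by
        have : 1 ≤ s := le_trans hℓ1 hcnt
        exact_mod_cast this
      have hs'pos : (0:ℝ) < (s':ℝ) := by exact_mod_cast hs'1
      have hucb := hI.2 t hKt ω istar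
      rw [hti] at hucb
      have hcnn : 0 ≤ c t s := Real.sqrt_nonneg _
      have hc'nn : 0 ≤ c t s' := Real.sqrt_nonneg _
      -- upper bound on ucbIndex of i
      have hui : ucbIndex R I i t ω < μ i + 2 * c t s := by
        rw [ucbIndex, empMean, ← hs]
        have hdiv : (∑ u ∈ Finset.range s, R i u ω) / (s:ℝ) < μ i + c t s := by
          rw [div_lt_iff₀ hspos]
          nlinarith [hb1]
        have : Real.sqrt (2 * Real.log ((t:ℝ)+1) / (s:ℝ)) = c t s := by rw [hcdef]
        rw [this]
        linarith
      -- lower bound on ucbIndex of istar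
      have hus : μstar < ucbIndex R I istar t ω := by
        rw [ucbIndex, empMean, ← hs']
        have hsum : (∑ u ∈ Finset.range s', (1 - R istar u ω))
            = (s':ℝ) - ∑ u ∈ Finset.range s', R istar u ω := by
          rw [Finset.sum_sub_distrib, Finset.sum_const, Finset.card_range, nsmul_eq_mul,
            mul_one]
        rw [hsum] at hb2
        have hdiv : μstar - c t s' < (∑ u ∈ Finset.range s', R istar u ω) / (s':ℝ) := by
          rw [lt_div_iff₀ hs'pos]
          nlinarith [hb2]
        have : Real.sqrt (2 * Real.log ((t:ℝ)+1) / (s':ℝ)) = c t s' := by rw [hcdef]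
        rw [this]
        linarith
      -- the exploration radius is small
      have h2c : 2 * c t s ≤ Δ := by
        have hLn : Real.log ((t:ℝ)+1) ≤ Real.log n := by
          refine Real.log_le_log (by positivity) ?_
          exact_mod_cast Nat.succ_le_of_lt htn
        have hsge : 8 * Real.log n / Δ^2 ≤ (s:ℝ) := by
          refine le_trans hℓge ?_
          exact_mod_cast hcnt
        have h8 : 8 * Real.log n ≤ (s:ℝ) * Δ^2 :=
          (div_le_iff₀ (by positivity)).1 hsge
        have harg : 2 * Real.log ((t:ℝ)+1) / (s:ℝ) ≤ Δ^2/4 := by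
          rw [div_le_div_iff₀ hspos (by norm_num)]
          calc 2 * Real.log ((t:ℝ)+1) * 4 = 8 * Real.log ((t:ℝ)+1) := by ring
          _ ≤ 8 * Real.log n := by linarith
          _ ≤ (s:ℝ) * Δ^2 := h8
          _ = Δ^2 * (s:ℝ) := by ring
        calc 2 * c t s ≤ 2 * Real.sqrt (Δ^2/4) := by
              have := Real.sqrt_le_sqrt harg
              rw [hcdef]
              linarith [this]
        _ = Δ := by
              rw [show Δ^2/4 = (Δ/2)^2 by ring, Real.sqrt_sq (by linarith)]
              ring
      have : μstar < μstar := by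
        calc μstar < ucbIndex R I istar t ω := hus
        _ ≤ ucbIndex R I i t ω := hucb
        _ < μ i + 2 * c t s := hui
        _ ≤ μ i + Δ := by linarith
        _ = μstar := by rw [hΔdef]; ring
      exact lt_irrefl _ this
    -- Chernoff bounds for the bad events
    have hinj : Function.Injective (fun u : ℕ => ((i, u) : Fin K × ℕ)) :=
      fun a b h => by simpa using (Prod.ext_iff.1 h).2
    have hinj' : Function.Injective (fun u : ℕ => ((istar, u) : Fin K × ℕ)) :=
      fun a b h => by simpa using (Prod.ext_iff.1 h).2
    have hind_i : iIndepFun (fun u => R i u) P :=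
      iIndepFun_comp_inj hindep hinj
    have hind_s : iIndepFun
        (fun u (ω : Ω) => 1 - R istar u ω) P := by
      have := (iIndepFun_comp_inj hindep hinj').comp (fun _ x => 1 - x)
        (fun _ => measurable_const.sub measurable_id)
      exact this
    have hexp : ∀ s : ℕ, 1 ≤ s →
        Real.exp (-2 * (s:ℝ) * (c t s)^2) = (((t:ℝ)+1)^4)⁻¹ := by
      intro s hs1
      have hspos : (0:ℝ) < (s:ℝ) := by exact_mod_cast hs1
      have hcsq : (c t s)^2 = 2 * Real.log ((t:ℝ)+1) / (s:ℝ) :=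
        Real.sq_sqrt (by positivity)
      rw [hcsq, show -2 * (s:ℝ) * (2 * Real.log ((t:ℝ)+1) / (s:ℝ))
          = -(4 * Real.log ((t:ℝ)+1)) by field_simp; ring]
      exact exp_neg_four_log ht1
    have hB1 : ∀ s : ℕ, 1 ≤ s → (P (Bad1 s)).toReal ≤ (((t:ℝ)+1)^4)⁻¹ := by
      intro s hs1
      have := chernoff (P := P) (X := fun u => R i u) (fun u => hRmeas i u)
        (fun u ω => hRrange i u ω) hind_i (p := μ i) (fun u => hmean i u) s
        (ε := c t s) (Real.sqrt_nonneg _)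
      rw [hB1def]
      calc (P {ω | (s:ℝ) * μ i + (s:ℝ) * c t s ≤ ∑ u ∈ Finset.range s, R i u ω}).toReal
          ≤ Real.exp (-2 * (s:ℝ) * (c t s)^2) := this
      _ = (((t:ℝ)+1)^4)⁻¹ := hexp s hs1
    have hB2 : ∀ s : ℕ, 1 ≤ s → (P (Bad2 s)).toReal ≤ (((t:ℝ)+1)^4)⁻¹ := by
      intro s hs1
      have hmean' : ∀ u : ℕ, ∫ ω, (1 - R istar u ω) ∂P = 1 - μstar := by
        intro u
        rw [integral_sub (integrable_const 1) (bdd_integrable (hRmeas istar u) (C := 1)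
          (fun ω => by
            have h1 := (hRrange istar u ω).1; have h2 := (hRrange istar u ω).2
            rw [abs_le]; constructor <;> [linarith; linarith]))]
        rw [hmean istar u, histar]
        simp
      have hrange' : ∀ u ω, (1 - R istar u ω) ∈ Set.Icc (0:ℝ) 1 := by
        intro u ω
        have h1 := (hRrange istar u ω).1; have h2 := (hRrange istar u ω).2
        constructor <;> [linarith; linarith]
      have := chernoff (P := P) (X := fun u ω => 1 - R istar u ω)
        (fun u => measurable_const.sub (hRmeas istar u)) hrange' hind_s
        (p := 1 - μstar) hmean' s (ε := c t s) (Real.sqrt_nonneg _)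
      rw [hB2def]
      calc (P {ω | (s:ℝ) * (1 - μstar) + (s:ℝ) * c t s
            ≤ ∑ u ∈ Finset.range s, (1 - R istar u ω)}).toReal
          ≤ Real.exp (-2 * (s:ℝ) * (c t s)^2) := this
      _ = (((t:ℝ)+1)^4)⁻¹ := hexp s hs1
    -- union bound
    have hmeasle : P (A t) ≤ (∑ s ∈ Finset.Icc ℓ t, P (Bad1 s))
        + ∑ s ∈ Finset.Icc 1 t, P (Bad2 s) :=
      le_trans (measure_mono hsub) (le_trans (measure_union_le _ _)
        (add_le_add (measure_biUnion_finset_le _ _) (measure_biUnion_finset_le _ _)))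
    have hne1 : (∑ s ∈ Finset.Icc ℓ t, P (Bad1 s)) ≠ ⊤ :=
      (ENNReal.sum_lt_top.2 fun s _ => measure_lt_top P _).ne
    have hne2 : (∑ s ∈ Finset.Icc 1 t, P (Bad2 s)) ≠ ⊤ :=
      (ENNReal.sum_lt_top.2 fun s _ => measure_lt_top P _).ne
    have htoReal : (P (A t)).toReal ≤ (∑ s ∈ Finset.Icc ℓ t, (P (Bad1 s)).toReal)
        + ∑ s ∈ Finset.Icc 1 t, (P (Bad2 s)).toReal := by
      have := ENNReal.toReal_mono (by
        exact ENNReal.add_ne_top.2 ⟨hne1, hne2⟩) hmeasle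
      rwa [ENNReal.toReal_add hne1 hne2,
        ENNReal.toReal_sum (fun s _ => (measure_lt_top P _).ne),
        ENNReal.toReal_sum (fun s _ => (measure_lt_top P _).ne)] at this
    have hcard1 : (Finset.Icc ℓ t).card ≤ t := by
      rw [Nat.card_Icc]; omega
    have hcard2 : (Finset.Icc 1 t).card ≤ t := by
      rw [Nat.card_Icc]; omega
    have hsum1 : ∑ s ∈ Finset.Icc ℓ t, (P (Bad1 s)).toReal ≤ (t:ℝ) * (((t:ℝ)+1)^4)⁻¹ := by
      calc ∑ s ∈ Finset.Icc ℓ t, (P (Bad1 s)).toReal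
          ≤ ∑ _s ∈ Finset.Icc ℓ t, (((t:ℝ)+1)^4)⁻¹ :=
            Finset.sum_le_sum fun s hs =>
              hB1 s (le_trans hℓ1 (Finset.mem_Icc.1 hs).1)
      _ = ((Finset.Icc ℓ t).card : ℝ) * (((t:ℝ)+1)^4)⁻¹ := by
            rw [Finset.sum_const, nsmul_eq_mul]
      _ ≤ (t:ℝ) * (((t:ℝ)+1)^4)⁻¹ := by
            have : ((Finset.Icc ℓ t).card : ℝ) ≤ (t:ℝ) := by exact_mod_cast hcard1
            exact mul_le_mul_of_nonneg_right this (by positivity)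
    have hsum2 : ∑ s ∈ Finset.Icc 1 t, (P (Bad2 s)).toReal ≤ (t:ℝ) * (((t:ℝ)+1)^4)⁻¹ := by
      calc ∑ s ∈ Finset.Icc 1 t, (P (Bad2 s)).toReal
          ≤ ∑ _s ∈ Finset.Icc 1 t, (((t:ℝ)+1)^4)⁻¹ :=
            Finset.sum_le_sum fun s hs => hB2 s (Finset.mem_Icc.1 hs).1
      _ = ((Finset.Icc 1 t).card : ℝ) * (((t:ℝ)+1)^4)⁻¹ := by
            rw [Finset.sum_const, nsmul_eq_mul]
      _ ≤ (t:ℝ) * (((t:ℝ)+1)^4)⁻¹ := by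
            have : ((Finset.Icc 1 t).card : ℝ) ≤ (t:ℝ) := by exact_mod_cast hcard2
            exact mul_le_mul_of_nonneg_right this (by positivity)
    have htnn : (0:ℝ) ≤ (t:ℝ) := Nat.cast_nonneg t
    calc (P (A t)).toReal ≤ (t:ℝ) * (((t:ℝ)+1)^4)⁻¹ + (t:ℝ) * (((t:ℝ)+1)^4)⁻¹ :=
          le_trans htoReal (add_le_add hsum1 hsum2)
    _ = 2 * (t:ℝ) / ((t:ℝ)+1)^4 := by rw [div_eq_mul_inv]; ring
    _ ≤ 2/((t:ℝ)+1)^2 := by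
          rw [div_le_div_iff₀ (by positivity) (by positivity)]
          have key : (0:ℝ) ≤ ((t:ℝ)+1)^2 * (((t:ℝ)+1)^2 - (t:ℝ)) :=
            mul_nonneg (sq_nonneg _) (by nlinarith [sq_nonneg (t:ℝ)])
          nlinarith [key]
  -- Step 3 : combine
  have hKn2 : 2 ≤ K := hK
  calc ∫ ω, (playCount I i n ω : ℝ) ∂P
      ≤ (ℓ:ℝ) + ∑ t ∈ Finset.Ico K n, (P (A t)).toReal := step1
  _ ≤ (ℓ:ℝ) + ∑ t ∈ Finset.Ico K n, 2/((t:ℝ)+1)^2 := by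
      gcongr with t ht
      rw [Finset.mem_Ico] at ht
      exact step2 t ht.1 ht.2
  _ ≤ (ℓ:ℝ) + ∑ t ∈ Finset.Ico 2 n, 2/((t:ℝ)+1)^2 := by
      have hmono : ∑ t ∈ Finset.Ico K n, 2/((t:ℝ)+1)^2
          ≤ ∑ t ∈ Finset.Ico 2 n, 2/((t:ℝ)+1)^2 :=
        Finset.sum_le_sum_of_subset_of_nonneg
          (Finset.Ico_subset_Ico hKn2 le_rfl) fun t _ _ => by positivity
      linarith
  _ ≤ (ℓ:ℝ) + 1 := by linarith [sum_inv_sq_bound n]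
  _ ≤ 8 * Real.log n / Δ^2 + 2 := by linarith

end UCB1Aux

/-- UCB1 regret bound (Auer et al. 2002): for a `K`-armed (`K > 1`) stochastic bandit whose
arms have i.i.d. rewards in `[0,1]` with means `μ i`, independent across arms, the
pseudo-regret `Σ_{i : μ_i < μ*} (μ* - μ_i)·E[T_i(n)]` of the UCB1 policy after any number `n`
of trials is at most
`8·Σ_{i : μ_i < μ*} (ln n / (μ* - μ_i)) + (1 + π²/3)·Σ_i (μ* - μ_i)`. -/
theorem ucb1_regret_bound {Ω : Type*} [MeasurableSpace Ω]
    (P : Measure Ω) [IsProbabilityMeasure P] {K : ℕ} (hK : 1 < K)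
    (R : Fin K → ℕ → Ω → ℝ) (hRmeas : ∀ i s, Measurable (R i s))
    (hRrange : ∀ i s ω, R i s ω ∈ Set.Icc (0 : ℝ) 1)
    (hiid : ∀ i s, P.map (R i s) = P.map (R i 0))
    (hindep : iIndepFun (fun p : Fin K × ℕ => R p.1 p.2) P)
    (μ : Fin K → ℝ) (hmean : ∀ i s, ∫ ω, R i s ω ∂P = μ i)
    (μstar : ℝ) (hμstar : IsGreatest (Set.range μ) μstar)
    (I : ℕ → Ω → Fin K) (hImeas : ∀ t, Measurable (I t)) (hI : IsUCB1Policy R I)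
    (n : ℕ) :
    ∑ i ∈ Finset.univ.filter (fun i => μ i < μstar),
        (μstar - μ i) * ∫ ω, (playCount I i n ω : ℝ) ∂P
      ≤ 8 * ∑ i ∈ Finset.univ.filter (fun i => μ i < μstar),
            Real.log n / (μstar - μ i)
        + (1 + Real.pi ^ 2 / 3) * ∑ i : Fin K, (μstar - μ i) := by
  classical
  obtain ⟨⟨istar, histar⟩, hub⟩ := hμstar
  have hΔnn : ∀ j : Fin K, 0 ≤ μstar - μ j := fun j => sub_nonneg.2 (hub ⟨j, rfl⟩)
  have hπ : (2:ℝ) ≤ 1 + Real.pi^2/3 := by nlinarith [Real.pi_gt_three]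
  set S : Finset (Fin K) := Finset.univ.filter (fun i => μ i < μstar) with hS
  have hpc : ∀ i ∈ S, 0 ≤ ∫ ω, (playCount I i n ω : ℝ) ∂P :=
    fun i _ => integral_nonneg fun ω => Nat.cast_nonneg _
  calc ∑ i ∈ S, (μstar - μ i) * ∫ ω, (playCount I i n ω : ℝ) ∂P
      ≤ ∑ i ∈ S, (μstar - μ i) * (8 * Real.log n / (μstar - μ i) ^ 2 + 2) := by
        refine Finset.sum_le_sum fun i hiS => ?_
        have hi : μ i < μstar := (Finset.mem_filter.1 hiS).2
        exact mul_le_mul_of_nonneg_left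
          (arm_bound P hK R hRmeas hRrange hindep μ hmean μstar I hImeas hI n i istar
            histar hi) (hΔnn i)
  _ = ∑ i ∈ S, (8 * Real.log n / (μstar - μ i) + 2 * (μstar - μ i)) := by
        refine Finset.sum_congr rfl fun i hiS => ?_
        have hi : μ i < μstar := (Finset.mem_filter.1 hiS).2
        have hΔ : μstar - μ i ≠ 0 := sub_ne_zero.2 (ne_of_lt hi).symm
        field_simp
  _ = 8 * (∑ i ∈ S, Real.log n / (μstar - μ i)) + ∑ i ∈ S, 2 * (μstar - μ i) := by
        rw [Finset.sum_add_distrib, Finset.mul_sum]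
        congr 1
        refine Finset.sum_congr rfl fun i _ => ?_
        ring
  _ ≤ 8 * (∑ i ∈ S, Real.log n / (μstar - μ i))
        + (1 + Real.pi ^ 2 / 3) * ∑ i : Fin K, (μstar - μ i) := by
        have h1 : ∑ i ∈ S, 2 * (μstar - μ i) ≤ ∑ i : Fin K, 2 * (μstar - μ i) :=
          Finset.sum_le_sum_of_subset_of_nonneg (Finset.filter_subset _ _)
            fun i _ _ => by linarith [hΔnn i]
        have h2 : ∑ i : Fin K, 2 * (μstar - μ i)
            ≤ (1 + Real.pi ^ 2 / 3) * ∑ i : Fin K, (μstar - μ i) := by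
          rw [← Finset.mul_sum]
          refine mul_le_mul_of_nonneg_right hπ ?_
          exact Finset.sum_nonneg fun i _ => hΔnn i
        linarith
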